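/- Let ε be a real with 0 < ε ≤ 1/4 and let n be an integer with n ≥ 1/ε. If X is a binomial random variable with parameters n and 1/2, then P(X ≥ (1/2 + ε)n) ≥ e^{−20ε²n}/(n+1). -/

import Mathlib

set_option maxHeartbeats 1600000 in
/-- For 0 < ε ≤ 1/4 and n ≥ 1/ε, for X ~ B(n,1/2):
    P(X ≥ (1/2+ε)n) = 2^{−n} ∑_{i=⌈(1/2+ε)n⌉}^n C(n,i) ≥ e^{−20ε²n}/(n+1). -/
theorem stmt17 (ε : ℝ) (hε : 0 < ε) (hε4 : ε ≤ 1/4) (n : ℕ) (hn : 1/ε ≤ (n : ℝ)) :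
    (∑ i ∈ Finset.Icc ⌈(1/2 + ε) * (n : ℝ)⌉₊ n, (n.choose i : ℝ)) / 2 ^ n
      ≥ Real.exp (-(20 * ε^2 * n)) / (n + 1) := by
  set k := ⌈(1/2 + ε) * (n : ℝ)⌉₊ with hkdef
  set m := n / 2 with hmdef
  set r : ℝ := (1 - 2*ε) / (1 + 4*ε) with hrdef
  have hεn : 1 ≤ ε * n := by
    rw [div_le_iff₀ hε] at hn; linarith [hn]
  have hn1 : (1:ℝ) ≤ n := by nlinarith
  have hr0 : 0 < r := by
    apply div_pos <;> linarith
  -- k ≤ n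
  have hkn : k ≤ n := by
    rw [hkdef]
    apply Nat.ceil_le.mpr
    nlinarith
  -- (1/2+ε)n ≤ k ≤ (1/2+ε)n + 1
  have hkl : (1/2 + ε) * (n:ℝ) ≤ k := Nat.le_ceil _
  have hku : (k:ℝ) ≤ (1/2 + ε) * n + 1 := by
    have := Nat.ceil_lt_add_one (show (0:ℝ) ≤ (1/2 + ε) * n by positivity)
    exact le_of_lt this
  -- m bounds
  have hml : ((n:ℝ) - 1) / 2 ≤ m := by
    have h2 : n ≤ 2 * m + 1 := by omega
    have := (Nat.cast_le (α := ℝ)).mpr h2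
    push_cast at this
    linarith
  have hmu : (m:ℝ) ≤ (n:ℝ) / 2 := by
    have := Nat.cast_div_le (m := n) (n := 2) (α := ℝ)
    simpa using this
  have hmk : m ≤ k := by
    have : (m:ℝ) ≤ (k:ℝ) := by nlinarith
    exact_mod_cast this
  -- step inequality
  have step : ∀ j, m ≤ j → j < k → (n.choose j : ℝ) * r ≤ n.choose (j+1) := by
    intro j hj hjk
    have hjn : j < n := lt_of_lt_of_le hjk hkn
    have hid : (n.choose (j+1) : ℝ) * (j+1) = (n.choose j : ℝ) * ((n:ℝ) - j) := by
      have h := Nat.choose_succ_right_eq n j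
      have : ((n.choose (j+1) * (j+1) : ℕ) : ℝ) = ((n.choose j * (n - j) : ℕ) : ℝ) := by
        exact_mod_cast congrArg (Nat.cast (R := ℝ)) h
      push_cast [Nat.cast_sub hjn.le] at this
      linarith
    -- j+1 ≤ k, so (j:ℝ)+1 ≤ k
    have hj1k : (j:ℝ) + 1 ≤ (k:ℝ) := by exact_mod_cast Nat.succ_le_of_lt hjk
    have hj1 : (j:ℝ) + 1 ≤ (1/2 + 2*ε) * n := by nlinarith
    have hnj : (1/2 - ε) * n ≤ (n:ℝ) - j := by nlinarith
    -- r * (j+1) ≤ n - j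
    have hkey : r * ((j:ℝ)+1) ≤ (n:ℝ) - j := by
      rw [hrdef, div_mul_eq_mul_div, div_le_iff₀ (by linarith : (0:ℝ) < 1 + 4*ε)]
      nlinarith
    have hc0 : (0:ℝ) < n.choose j := by
      exact_mod_cast Nat.choose_pos hjn.le
    have hj1pos : (0:ℝ) < (j:ℝ) + 1 := by positivity
    rw [← mul_le_mul_iff_of_pos_right hj1pos, hid]
    calc (n.choose j : ℝ) * r * ((j:ℝ)+1) = (n.choose j : ℝ) * (r * ((j:ℝ)+1)) := by ring
      _ ≤ (n.choose j : ℝ) * ((n:ℝ) - j) := by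
          exact mul_le_mul_of_nonneg_left hkey hc0.le
  -- induction: C(n,m) * r^d ≤ C(n, m+d)
  have ind : ∀ d : ℕ, m + d ≤ k → (n.choose m : ℝ) * r ^ d ≤ n.choose (m + d) := by
    intro d
    induction d with
    | zero => simp
    | succ d ih =>
        intro h
        have h' := ih (by omega)
        calc (n.choose m : ℝ) * r ^ (d+1) = ((n.choose m : ℝ) * r ^ d) * r := by ring
          _ ≤ (n.choose (m+d) : ℝ) * r := mul_le_mul_of_nonneg_right h' hr0.le
          _ ≤ (n.choose (m+d+1) : ℝ) := step (m+d) (by omega) (by omega)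
  have hB : (n.choose m : ℝ) * r ^ (k - m) ≤ n.choose k := by
    have := ind (k - m) (by omega)
    rwa [Nat.add_sub_cancel' hmk] at this
  -- 2^n ≤ (n+1) * C(n, m)
  have hE : (2:ℝ) ^ n ≤ ((n:ℝ) + 1) * n.choose m := by
    have hnat : 2 ^ n ≤ (n + 1) * n.choose m := by
      calc 2 ^ n = ∑ i ∈ Finset.range (n+1), n.choose i := (Nat.sum_range_choose n).symm
        _ ≤ (Finset.range (n+1)).card • n.choose (n/2) := by
            apply Finset.sum_le_card_nsmul
            intro i _
            exact Nat.choose_le_middle i n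
        _ = (n + 1) * n.choose m := by simp [smul_eq_mul, hmdef]
    exact_mod_cast hnat
  -- r^(k-m) ≥ exp(-20 ε² n)
  have hd : ((k - m : ℕ) : ℝ) ≤ (5/2) * (ε * n) := by
    have : ((k - m : ℕ) : ℝ) = (k:ℝ) - m := by
      push_cast [Nat.cast_sub hmk]; ring
    rw [this]
    linarith
  have hlogr : -8 * ε ≤ Real.log r := by
    have h1 : Real.log (1 + 4*ε) ≤ 4*ε := by
      have := Real.log_le_sub_one_of_pos (show (0:ℝ) < 1 + 4*ε by linarith)
      linarith
    have h2 : -(4*ε) ≤ Real.log (1 - 2*ε) := by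
      have hpos : (0:ℝ) < 1 - 2*ε := by linarith
      have := Real.log_le_sub_one_of_pos (show (0:ℝ) < (1 - 2*ε)⁻¹ by positivity)
      rw [Real.log_inv] at this
      have hinv : (1 - 2*ε)⁻¹ ≤ 1 + 4*ε := by
        rw [inv_eq_one_div, div_le_iff₀ hpos]
        nlinarith
      linarith
    rw [hrdef, Real.log_div (by linarith) (by linarith)]
    linarith
  have hD : Real.exp (-(20 * ε^2 * n)) ≤ r ^ (k - m) := by
    have hr : r ^ (k - m) = Real.exp (((k - m : ℕ):ℝ) * Real.log r) := by
      rw [Real.exp_nat_mul, Real.exp_log hr0]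
    rw [hr]
    apply Real.exp_le_exp.mpr
    have hd0 : (0:ℝ) ≤ ((k - m : ℕ) : ℝ) := by positivity
    nlinarith [mul_le_mul_of_nonneg_left hlogr hd0]
  -- sum ≥ C(n,k)
  have hA : (n.choose k : ℝ) ≤ ∑ i ∈ Finset.Icc k n, (n.choose i : ℝ) := by
    apply Finset.single_le_sum (f := fun i => (n.choose i : ℝ))
    · intro i _; positivity
    · simp [Finset.mem_Icc, hkn]
  -- combine
  rw [ge_iff_le, div_le_div_iff₀ (by positivity) (by positivity)]
  have hck0 : (0:ℝ) ≤ r ^ (k - m) := by positivity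
  calc Real.exp (-(20 * ε^2 * n)) * 2 ^ n ≤ r ^ (k - m) * 2 ^ n := by
        exact mul_le_mul_of_nonneg_right hD (by positivity)
    _ ≤ r ^ (k - m) * (((n:ℝ) + 1) * n.choose m) := by
        exact mul_le_mul_of_nonneg_left hE hck0
    _ = ((n.choose m : ℝ) * r ^ (k - m)) * ((n:ℝ) + 1) := by ring
    _ ≤ (n.choose k : ℝ) * ((n:ℝ) + 1) := by
        exact mul_le_mul_of_nonneg_right hB (by positivity)
    _ ≤ (∑ i ∈ Finset.Icc k n, (n.choose i : ℝ)) * ((n:ℝ) + 1) := by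
        exact mul_le_mul_of_nonneg_right hA (by positivity)
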